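/- Let g : ℝ → ℝ be a nonzero piecewise constant 2π/m-periodic steady state of the scale-invariant Euler system, with jump points a₀ < a₁ < ... and values gᵢ on (a_{i−1}, aᵢ), and let G solve G'' + 4G = g with G ∈ C¹. Then the C¹ matching condition at each jump point aᵢ forces gᵢ·tan(aᵢ − a_{i−1}) = −g_{i+1}·tan(a_{i+1} − aᵢ); in particular the values gᵢ strictly alternate in sign. -/

import Mathlib

open Real Set

lemma stmt14_hsin (c x : ℝ) :
    HasDerivAt (fun θ => Real.sin (2 * (θ - c))) (2 * Real.cos (2 * (x - c))) x := by
  have h1 : HasDerivAt (fun θ : ℝ => 2 * (θ - c)) 2 x := by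
    simpa using ((hasDerivAt_id x).sub_const c).const_mul 2
  simpa [mul_comm, Function.comp_def] using (Real.hasDerivAt_sin (2 * (x - c))).comp x h1

lemma stmt14_key (x : ℝ) (hx : 0 < x) (hx2 : x < π / 2) :
    (2 - 2 * Real.cos (2 * x)) / Real.sin (2 * x) = 2 * Real.tan x := by
  have hc : 0 < Real.cos x := Real.cos_pos_of_mem_Ioo ⟨by linarith [Real.pi_pos], hx2⟩
  have hs : 0 < Real.sin x := Real.sin_pos_of_pos_of_lt_pi hx (by linarith [Real.pi_pos])
  rw [Real.tan_eq_sin_div_cos, Real.sin_two_mul, Real.cos_two_mul]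
  have h2 : Real.sin x ^ 2 + Real.cos x ^ 2 = 1 := Real.sin_sq_add_cos_sq x
  field_simp
  nlinarith [hs, hc]

theorem stmt14 (aprev amid anext gi gi1 : ℝ)
    (h1 : aprev < amid) (h2 : amid < anext)
    (hl1 : amid - aprev < π / 2) (hl2 : anext - amid < π / 2)
    (hgi : gi ≠ 0)
    (G : ℝ → ℝ)
    (hGleft : ∀ θ ∈ Icc aprev amid,
      G θ = gi * (1 + (Real.sin (2 * (θ - amid)) - Real.sin (2 * (θ - aprev))) /
        Real.sin (2 * (amid - aprev))))
    (hGright : ∀ θ ∈ Icc amid anext,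
      G θ = gi1 * (1 + (Real.sin (2 * (θ - anext)) - Real.sin (2 * (θ - amid))) /
        Real.sin (2 * (anext - amid))))
    (hC1 : ∃ d, HasDerivWithinAt G d (Icc aprev amid) amid ∧
      HasDerivWithinAt G d (Icc amid anext) amid) :
    gi * Real.tan (amid - aprev) = -gi1 * Real.tan (anext - amid) ∧ gi * gi1 < 0 := by
  obtain ⟨d, hd1, hd2⟩ := hC1
  set s1 := Real.sin (2 * (amid - aprev)) with hs1def
  set s2 := Real.sin (2 * (anext - amid)) with hs2def
  -- left derivative
  have hfl : HasDerivAt (fun θ => gi * (1 + (Real.sin (2 * (θ - amid)) - Real.sin (2 * (θ - aprev))) / s1))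
      (gi * ((2 * Real.cos (2 * (amid - amid)) - 2 * Real.cos (2 * (amid - aprev))) / s1)) amid := by
    have := ((((stmt14_hsin amid amid).sub (stmt14_hsin aprev amid)).div_const s1).const_add 1).const_mul gi
    simpa using this
  have hfr : HasDerivAt (fun θ => gi1 * (1 + (Real.sin (2 * (θ - anext)) - Real.sin (2 * (θ - amid))) / s2))
      (gi1 * ((2 * Real.cos (2 * (amid - anext)) - 2 * Real.cos (2 * (amid - amid))) / s2)) amid := by
    have := ((((stmt14_hsin anext amid).sub (stmt14_hsin amid amid)).div_const s2).const_add 1).const_mul gi1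
    simpa using this
  have hdL : HasDerivWithinAt G (gi * ((2 * Real.cos (2 * (amid - amid)) - 2 * Real.cos (2 * (amid - aprev))) / s1))
      (Icc aprev amid) amid :=
    hfl.hasDerivWithinAt.congr (fun y hy => hGleft y hy) (hGleft amid ⟨h1.le, le_refl _⟩)
  have hdR : HasDerivWithinAt G (gi1 * ((2 * Real.cos (2 * (amid - anext)) - 2 * Real.cos (2 * (amid - amid))) / s2))
      (Icc amid anext) amid :=
    hfr.hasDerivWithinAt.congr (fun y hy => hGright y hy) (hGright amid ⟨le_refl _, h2.le⟩)
  have huL : UniqueDiffWithinAt ℝ (Icc aprev amid) amid :=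
    (uniqueDiffOn_Icc h1) amid (right_mem_Icc.2 h1.le)
  have huR : UniqueDiffWithinAt ℝ (Icc amid anext) amid :=
    (uniqueDiffOn_Icc h2) amid (left_mem_Icc.2 h2.le)
  have eL : d = gi * ((2 * Real.cos (2 * (amid - amid)) - 2 * Real.cos (2 * (amid - aprev))) / s1) := by
    rw [← hd1.derivWithin huL, ← hdL.derivWithin huL]
  have eR : d = gi1 * ((2 * Real.cos (2 * (amid - anext)) - 2 * Real.cos (2 * (amid - amid))) / s2) := by
    rw [← hd2.derivWithin huR, ← hdR.derivWithin huR]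
  have hcosneg : Real.cos (2 * (amid - anext)) = Real.cos (2 * (anext - amid)) := by
    rw [show (2 : ℝ) * (amid - anext) = -(2 * (anext - amid)) by ring, Real.cos_neg]
  have hkeyL : (2 - 2 * Real.cos (2 * (amid - aprev))) / s1 = 2 * Real.tan (amid - aprev) :=
    stmt14_key _ (by linarith) hl1
  have hkeyR : (2 - 2 * Real.cos (2 * (anext - amid))) / s2 = 2 * Real.tan (anext - amid) :=
    stmt14_key _ (by linarith) hl2
  have eL' : d = gi * (2 * Real.tan (amid - aprev)) := by
    rw [eL, ← hkeyL]
    norm_num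
  have eR' : d = gi1 * (-(2 * Real.tan (anext - amid))) := by
    rw [eR, hcosneg, ← hkeyR]
    have : (2 * Real.cos (2 * (anext - amid)) - 2 * Real.cos (2 * (amid - amid))) / s2
        = -((2 - 2 * Real.cos (2 * (anext - amid))) / s2) := by
      simp [Real.cos_zero]
      ring
    rw [this]
  have hmain : gi * Real.tan (amid - aprev) = -gi1 * Real.tan (anext - amid) := by
    have h := eL'.symm.trans eR'
    nlinarith [h]
  refine ⟨hmain, ?_⟩
  have htL : 0 < Real.tan (amid - aprev) :=
    Real.tan_pos_of_pos_of_lt_pi_div_two (by linarith) hl1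
  have htR : 0 < Real.tan (anext - amid) :=
    Real.tan_pos_of_pos_of_lt_pi_div_two (by linarith) hl2
  have hgi1 : gi1 ≠ 0 := by
    intro h0
    rw [h0] at hmain
    have : gi * Real.tan (amid - aprev) = 0 := by simpa using hmain
    rcases mul_eq_zero.1 this with h | h
    · exact hgi h
    · exact htL.ne' h
  have hne : gi1 * Real.tan (anext - amid) ≠ 0 := mul_ne_zero hgi1 htR.ne'
  have hx : gi * gi1 * (Real.tan (amid - aprev) * Real.tan (anext - amid))
      = -(gi1 * Real.tan (anext - amid)) ^ 2 := by
    linear_combination (gi1 * Real.tan (anext - amid)) * hmain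
  nlinarith [sq_pos_of_ne_zero hne, hx, mul_pos htL htR]
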